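/- Left contraction for δ-separation: for any directed graph G = (V,E) and any subsets A, B, C, D ⊆ V, if C δ-separates A from B in G (A ir_δ B | C) and A ∪ C δ-separates D from B in G (D ir_δ B | A ∪ C), then C δ-separates A ∪ D from B in G ((A ∪ D) ir_δ B | C). -/

import Mathlib

open Set

variable {V : Type*}

/-- There is a directed path (a sequence of ≥ 2 distinct vertices joined by
directed edges) from `v` to `w`; i.e. `v` is an ancestor of `w`. -/
def DirPathConn (E : V → V → Prop) (v w : V) : Prop :=
  ∃ l : List V, l.Chain' E ∧ l.Nodup ∧ 2 ≤ l.length ∧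
    l.head? = some v ∧ l.getLast? = some w

/-- `an(A)`: vertices outside `A` that are ancestors of some element of `A`. -/
def anSet (E : V → V → Prop) (A : Set V) : Set V :=
  {v | v ∉ A ∧ ∃ a ∈ A, DirPathConn E v a}

/-- `An(A) = A ∪ an(A)`, the smallest ancestral set containing `A`. -/
def AnSet (E : V → V → Prop) (A : Set V) : Set V := A ∪ anSet E A

/-- `pa(A)`: parents of `A` outside of `A`. -/
def paSet (E : V → V → Prop) (A : Set V) : Set V :=
  {v | v ∉ A ∧ ∃ a ∈ A, E v a}

/-- `cl(A) = A ∪ pa(A)`, the closure of `A`. -/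
def clSet (E : V → V → Prop) (A : Set V) : Set V := A ∪ paSet E A

/-- The induced subgraph `G_A` (as an edge relation on `V` supported on `A`). -/
def inducedGraph (E : V → V → Prop) (A : Set V) : V → V → Prop :=
  fun j k => E j k ∧ j ∈ A ∧ k ∈ A

/-- `G^B`: delete from `G` every directed edge starting in `B`. -/
def delOut (E : V → V → Prop) (B : Set V) : V → V → Prop :=
  fun j k => E j k ∧ j ∉ B

/-- The moral graph `G^m`: distinct `j, k` are adjacent iff they are joined by
an edge in some direction or have a common child. -/
def moralGraph (E : V → V → Prop) : V → V → Prop :=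
  fun j k => j ≠ k ∧ (E j k ∨ E k j ∨ ∃ c, E j c ∧ E k c)

/-- `l` is an undirected path from `v` to `w` in the undirected graph `H`:
a sequence of ≥ 2 distinct vertices, consecutive ones adjacent. -/
def IsUPath (H : V → V → Prop) (l : List V) (v w : V) : Prop :=
  l.Chain' H ∧ l.Nodup ∧ 2 ≤ l.length ∧
    l.head? = some v ∧ l.getLast? = some w

/-- `A ⊥_g B | C` in the undirected graph `H`: every path from a vertex of `A`
to a vertex of `B` contains a vertex of `C`. -/
def uSep (H : V → V → Prop) (A B C : Set V) : Prop :=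
  ∀ v ∈ A, ∀ w ∈ B, ∀ l : List V, IsUPath H l v w → ∃ c ∈ C, c ∈ l

/-- δ-separation for pairwise disjoint `A, B, C`: `A ⊥_g B | C` in the moral
graph of the subgraph of `G^B` induced by `An(A ∪ B ∪ C)`. -/
def deltaSepDisjoint (E : V → V → Prop) (A B C : Set V) : Prop :=
  uSep (moralGraph (inducedGraph (delOut E B) (AnSet E (A ∪ B ∪ C)))) A B C

/-- δ-separation `A ir_δ B | C` for general (not necessarily disjoint) sets:
`C \ B` δ-separates `A \ (B ∪ C)` from `B`. -/
def deltaSep (E : V → V → Prop) (A B C : Set V) : Prop :=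
  deltaSepDisjoint E (A \ (B ∪ C)) B (C \ B)

section AuxListLemmas

private lemma aux_chain'_rtg_head {E : V → V → Prop} {l : List V} {u : V} (hc : l.Chain' E)
    (hh : l.head? = some u) : ∀ x ∈ l, Relation.ReflTransGen E u x := by
  induction l generalizing u with
  | nil => simp
  | cons a t ih =>
    simp only [List.head?_cons, Option.some.injEq] at hh
    subst hh
    intro x hx
    rcases List.mem_cons.1 hx with rfl | hx
    · exact .refl
    · cases t with
      | nil => simp at hx
      | cons b t' =>
        rcases List.isChain_cons_cons.1 hc with ⟨hab, hc'⟩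
        exact .head hab (ih hc' rfl x hx)

private lemma aux_chain'_rtg_last {E : V → V → Prop} {l : List V} {w : V} (hc : l.Chain' E)
    (hh : l.getLast? = some w) : ∀ x ∈ l, Relation.ReflTransGen E x w := by
  induction l with
  | nil => simp
  | cons a t ih =>
    cases t with
    | nil =>
      simp only [List.getLast?_singleton, Option.some.injEq] at hh
      subst hh
      intro x hx
      simp only [List.mem_singleton] at hx
      subst hx
      exact .refl
    | cons b t' =>
      rcases List.isChain_cons_cons.1 hc with ⟨hab, hc'⟩
      rw [List.getLast?_cons_cons] at hh
      intro x hx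
      rcases List.mem_cons.1 hx with rfl | hx
      · exact .head hab (ih hc' hh b (by simp))
      · exact ih hc' hh x hx

private lemma aux_transGen_walk {E : V → V → Prop} {u a : V} (h : Relation.TransGen E u a) :
    ∃ l : List V, l.Chain' E ∧ 2 ≤ l.length ∧ l.head? = some u ∧ l.getLast? = some a := by
  induction h with
  | single hb => exact ⟨[u, _], List.isChain_pair.2 hb, by simp, rfl, rfl⟩
  | tail _ hbc ih =>
    obtain ⟨l, hc, hlen, hh, hl⟩ := ih
    refine ⟨l ++ [_], ?_, by simp; omega, ?_, List.getLast?_concat⟩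
    · refine List.isChain_append.2 ⟨hc, List.isChain_singleton _, ?_⟩
      intro x hx y hy
      simp only [List.head?_cons, Option.mem_def, Option.some.injEq] at hy
      rw [Option.mem_def, hl] at hx
      cases hx; cases hy; exact hbc
    · rw [List.head?_append_of_ne_nil]
      · exact hh
      · rintro rfl; simp at hh

private lemma aux_exists_dup_split {l : List V} (h : ¬ l.Nodup) :
    ∃ (x : V) (l₁ l₂ l₃ : List V), l = l₁ ++ x :: (l₂ ++ x :: l₃) := by
  induction l with
  | nil => simp at h
  | cons a t ih =>
    rw [List.nodup_cons] at h
    by_cases ha : a ∈ t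
    · obtain ⟨s, t', rfl⟩ := List.append_of_mem ha
      exact ⟨a, [], s, t', rfl⟩
    · obtain ⟨x, l₁, l₂, l₃, rfl⟩ := ih (by tauto)
      exact ⟨x, a :: l₁, l₂, l₃, rfl⟩

private lemma aux_chain'_dedup {E : V → V → Prop} :
    ∀ (n : ℕ) (l : List V), l.length ≤ n → l.Chain' E →
    ∃ l' : List V, l'.Chain' E ∧ l'.Nodup ∧ l'.head? = l.head? ∧ l'.getLast? = l.getLast? ∧
      ∀ x ∈ l', x ∈ l := by
  intro n
  induction n with
  | zero =>
    intro l hl _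
    rw [Nat.le_zero, List.length_eq_zero_iff] at hl
    subst hl
    exact ⟨[], List.isChain_nil, by simp, rfl, rfl, by simp⟩
  | succ n ih =>
    intro l hl hc
    by_cases hnd : l.Nodup
    · exact ⟨l, hc, hnd, rfl, rfl, fun x hx => hx⟩
    · obtain ⟨x, l₁, l₂, l₃, rfl⟩ := aux_exists_dup_split hnd
      have hsuf : (x :: l₃).Chain' E := hc.suffix ⟨l₁ ++ x :: l₂, by simp⟩
      have hpre : (l₁ ++ [x]).Chain' E := hc.prefix ⟨l₂ ++ x :: l₃, by simp⟩
      have hc' : (l₁ ++ x :: l₃).Chain' E := by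
        have : ((l₁ ++ [x]) ++ l₃).Chain' E := by
          refine List.isChain_append.2 ⟨hpre, (List.isChain_cons.1 hsuf).2, ?_⟩
          intro a ha b hb
          rw [Option.mem_def, List.getLast?_concat] at ha
          cases ha
          exact (List.isChain_cons.1 hsuf).1 b hb
        simpa using this
      have hlen : (l₁ ++ x :: l₃).length ≤ n := by
        simp only [List.length_append, List.length_cons] at hl ⊢
        omega
      obtain ⟨l', h1, h2, h3, h4, h5⟩ := ih _ hlen hc'
      refine ⟨l', h1, h2, ?_, ?_, ?_⟩
      · rw [h3]; cases l₁ <;> simp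
      · rw [h4, List.getLast?_append_cons, List.getLast?_append_cons]
        have : x :: (l₂ ++ x :: l₃) = (x :: l₂) ++ x :: l₃ := by simp
        rw [this, List.getLast?_append_cons]
      · intro y hy
        have := h5 y hy
        simp only [List.mem_append, List.mem_cons] at this ⊢
        tauto

private lemma aux_chain'_mono_mem {R R' : V → V → Prop} {P : V → Prop} :
    ∀ {l : List V}, l.Chain' R → (∀ x ∈ l, P x) →
      (∀ a b, R a b → P a → P b → R' a b) → l.Chain' R' := by
  intro l
  induction l with
  | nil => intros; exact List.isChain_nil
  | cons a t ih =>
    intro hc hP himp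
    cases t with
    | nil => exact List.isChain_singleton _
    | cons b t' =>
      rw [List.Chain', List.isChain_cons_cons] at hc ⊢
      exact ⟨himp _ _ hc.1 (hP a (by simp)) (hP b (by simp)),
        ih hc.2 (fun x hx => hP x (List.mem_cons_of_mem _ hx)) himp⟩

private lemma aux_not_chain'_split {R : V → V → Prop} :
    ∀ {l : List V}, ¬ l.Chain' R → ∃ (l₁ : List V) (a b : V) (l₂ : List V),
      l = l₁ ++ a :: b :: l₂ ∧ ¬ R a b := by
  intro l
  induction l with
  | nil => intro h; exact absurd List.isChain_nil h
  | cons a t ih =>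
    intro h
    cases t with
    | nil => exact absurd (List.isChain_singleton _) h
    | cons b t' =>
      rw [List.Chain', List.isChain_cons_cons] at h
      by_cases hab : R a b
      · obtain ⟨l₁, x, y, l₂, heq, hxy⟩ := ih (by tauto)
        exact ⟨a :: l₁, x, y, l₂, by rw [heq]; rfl, hxy⟩
      · exact ⟨[], a, b, t', rfl, hab⟩

private lemma aux_last_pred_split {P : V → Prop} :
    ∀ {l : List V}, (∃ x ∈ l, P x) → ∃ (l₁ : List V) (q : V) (t : List V),
      l = l₁ ++ q :: t ∧ P q ∧ ∀ x ∈ t, ¬ P x := by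
  intro l
  induction l with
  | nil => simp
  | cons a t ih =>
    intro h
    by_cases ht : ∃ x ∈ t, P x
    · obtain ⟨l₁, q, t', rfl, h1, h2⟩ := ih ht
      exact ⟨a :: l₁, q, t', rfl, h1, h2⟩
    · push_neg at ht
      obtain ⟨x, hx, hPx⟩ := h
      rcases List.mem_cons.1 hx with rfl | hx
      · exact ⟨[], x, t, rfl, hPx, ht⟩
      · exact absurd hPx (ht x hx)

end AuxListLemmas

section AuxGraphLemmas

private def mg (E : V → V → Prop) (B S : Set V) : V → V → Prop :=
  moralGraph (inducedGraph (delOut E B) S)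

private lemma mg_iff {E : V → V → Prop} {B S : Set V} {x y : V} :
    mg E B S x y ↔ x ≠ y ∧
      ((E x y ∧ x ∉ B) ∧ x ∈ S ∧ y ∈ S ∨ (E y x ∧ y ∉ B) ∧ y ∈ S ∧ x ∈ S ∨
        ∃ c, ((E x c ∧ x ∉ B) ∧ x ∈ S ∧ c ∈ S) ∧ (E y c ∧ y ∉ B) ∧ y ∈ S ∧ c ∈ S) :=
  Iff.rfl

private lemma mg_mem {E : V → V → Prop} {B S : Set V} {x y : V} (h : mg E B S x y) :
    x ∈ S ∧ y ∈ S := by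
  rw [mg_iff] at h
  obtain ⟨-, h | h | ⟨c, hc1, hc2⟩⟩ := h
  · exact ⟨h.2.1, h.2.2⟩
  · exact ⟨h.2.2, h.2.1⟩
  · exact ⟨hc1.2.1, hc2.2.1⟩

private lemma aux_dirPathConn_transGen {E : V → V → Prop} {u a : V} (h : DirPathConn E u a) :
    Relation.TransGen E u a := by
  obtain ⟨l, hc, -, hlen, hh, hl⟩ := h
  cases l with
  | nil => simp at hh
  | cons x t =>
    simp only [List.head?_cons, Option.some.injEq] at hh
    subst hh
    cases t with
    | nil => simp at hlen
    | cons b t' =>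
      have hab := (List.isChain_cons_cons.1 hc).1
      rw [List.getLast?_cons_cons] at hl
      exact Relation.TransGen.trans_left (Relation.TransGen.single hab)
        (aux_chain'_rtg_last (List.isChain_cons_cons.1 hc).2 hl b (by simp))

private lemma aux_transGen_dirPathConn {E : V → V → Prop} {u a : V}
    (h : Relation.TransGen E u a) (hne : u ≠ a) : DirPathConn E u a := by
  obtain ⟨l, hc, hlen, hh, hl⟩ := aux_transGen_walk h
  obtain ⟨l', h1, h2, h3, h4, -⟩ := aux_chain'_dedup l.length l le_rfl hc
  rw [hh] at h3; rw [hl] at h4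
  refine ⟨l', h1, h2, ?_, h3, h4⟩
  match l', h3, h4 with
  | [], h3, _ => simp at h3
  | [x], h3, h4 =>
    simp only [List.head?_cons, Option.some.injEq] at h3
    simp only [List.getLast?_singleton, Option.some.injEq] at h4
    exact absurd (h3.symm.trans h4) hne
  | x :: y :: t, _, _ => simp

private lemma aux_mem_AnSet_iff {E : V → V → Prop} {W : Set V} {x : V} :
    x ∈ AnSet E W ↔ x ∈ W ∨ ∃ a ∈ W, Relation.TransGen E x a := by
  constructor
  · rintro (h | ⟨hx, a, ha, hp⟩)
    · exact .inl h
    · exact .inr ⟨a, ha, aux_dirPathConn_transGen hp⟩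
  · rintro (h | ⟨a, ha, hp⟩)
    · exact .inl h
    · by_cases hx : x ∈ W
      · exact .inl hx
      · exact .inr ⟨hx, a, ha, aux_transGen_dirPathConn hp (fun h => hx (h ▸ ha))⟩

private lemma aux_rtg_mem_AnSet {E : V → V → Prop} {W : Set V} {u x : V}
    (h : Relation.ReflTransGen E u x) (hx : x ∈ AnSet E W) : u ∈ AnSet E W := by
  rw [aux_mem_AnSet_iff] at hx ⊢
  rcases Relation.reflTransGen_iff_eq_or_transGen.1 h with rfl | htg
  · exact hx
  · rcases hx with hx | ⟨a, ha, hp⟩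
    · exact .inr ⟨x, hx, htg⟩
    · exact .inr ⟨a, ha, htg.trans hp⟩

private lemma aux_AnSet_mono {E : V → V → Prop} {W W' : Set V} (h : W ⊆ W') :
    AnSet E W ⊆ AnSet E W' := by
  intro x hx
  rw [aux_mem_AnSet_iff] at hx ⊢
  rcases hx with hx | ⟨a, ha, hp⟩
  · exact .inl (h hx)
  · exact .inr ⟨a, h ha, hp⟩

private lemma aux_escape {E : V → V → Prop} (hE : ∀ j k, E j k → j ≠ k) {B S1 S D : Set V}
    (hBS1 : B ⊆ S1)
    (hS1closed : ∀ u x, Relation.ReflTransGen E u x → x ∈ S1 → u ∈ S1)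
    (hSanc : ∀ x a, a ∈ D → Relation.ReflTransGen E x a → x ∈ S)
    {u : V} (hu : u ∉ S1) (hud : ∃ a ∈ D, Relation.ReflTransGen E u a) :
    ∃ (d : V) (rl : List V), d ∈ D ∧ d ∉ S1 ∧ rl.Chain' (mg E B S) ∧ rl.Nodup ∧
      (∀ x ∈ rl, x ∉ S1) ∧ rl.head? = some d ∧ rl.getLast? = some u := by
  obtain ⟨a, haD, hua⟩ := hud
  have hwalk : ∃ l : List V, l.Chain' E ∧ l.head? = some u ∧ l.getLast? = some a := by
    rcases Relation.reflTransGen_iff_eq_or_transGen.1 hua with rfl | htg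
    · exact ⟨[a], List.isChain_singleton _, rfl, rfl⟩
    · obtain ⟨l, hc, _, hh, hl⟩ := aux_transGen_walk htg
      exact ⟨l, hc, hh, hl⟩
  obtain ⟨l, hc, hh, hl⟩ := hwalk
  obtain ⟨l', hc', hnd', hh', hl', hmem⟩ := aux_chain'_dedup l.length l le_rfl hc
  rw [hh] at hh'; rw [hl] at hl'
  have hmem1 : ∀ x ∈ l', x ∉ S1 := fun x hx hxS1 =>
    hu (hS1closed u x (aux_chain'_rtg_head hc hh x (hmem x hx)) hxS1)
  have hmemS : ∀ x ∈ l', x ∈ S := fun x hx =>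
    hSanc x a haD (aux_chain'_rtg_last hc hl x (hmem x hx))
  have hchain : l'.Chain' (flip (mg E B S)) := by
    refine aux_chain'_mono_mem (P := fun x => x ∈ S ∧ x ∉ S1) hc' (fun x hx => ⟨hmemS x hx, hmem1 x hx⟩) ?_
    intro p q hpq hp hq
    show mg E B S q p
    rw [mg_iff]
    exact ⟨(hE p q hpq).symm, .inr (.inl ⟨⟨hpq, fun hpB => hp.2 (hBS1 hpB)⟩, hp.1, hq.1⟩)⟩
  have haS1 : a ∉ S1 := hmem1 a (List.mem_of_mem_getLast? (by simp [hl']))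
  refine ⟨a, l'.reverse, haD, haS1, List.isChain_reverse.2 hchain, (List.nodup_reverse.2 hnd'), ?_, ?_, ?_⟩
  · intro x hx; exact hmem1 x (List.mem_reverse.1 hx)
  · rw [List.head?_reverse]; exact hl'
  · rw [List.getLast?_eq_head?_reverse, List.reverse_reverse]; exact hh'

end AuxGraphLemmas

/-- Left contraction for δ-separation. -/
theorem deltaSep_left_contraction [Fintype V] (E : V → V → Prop)
    (hE : ∀ j k, E j k → j ≠ k) (A B C D : Set V)
    (h1 : deltaSep E A B C) (h2 : deltaSep E D B (A ∪ C)) :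
    deltaSep E (A ∪ D) B C := by
  classical
  unfold deltaSep deltaSepDisjoint at h1 h2 ⊢
  set W1 : Set V := A \ (B ∪ C) ∪ B ∪ C \ B with hW1
  set W2 : Set V := (A ∪ D) \ (B ∪ C) ∪ B ∪ C \ B with hW2
  have hW2eq : AnSet E (D \ (B ∪ (A ∪ C)) ∪ B ∪ (A ∪ C) \ B) = AnSet E W2 := by
    have heq : D \ (B ∪ (A ∪ C)) ∪ B ∪ (A ∪ C) \ B = W2 := by
      rw [hW2]; ext x
      simp only [Set.mem_union, Set.mem_diff, Set.mem_union]
      tauto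
    rw [heq]
  rw [hW2eq] at h2
  set S1 : Set V := AnSet E W1 with hS1def
  set S : Set V := AnSet E W2 with hSdef
  have hW1S1 : W1 ⊆ S1 := by rw [hS1def]; exact Set.subset_union_left
  have hW2S : W2 ⊆ S := by rw [hSdef]; exact Set.subset_union_left
  have hAS1 : A \ (B ∪ C) ⊆ S1 := fun x hx => hW1S1 (by rw [hW1]; exact .inl (.inl hx))
  have hBS1 : B ⊆ S1 := fun x hx => hW1S1 (by rw [hW1]; exact .inl (.inr hx))
  have hCS1 : C ⊆ S1 := fun x hx => hW1S1 (by
    rw [hW1]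
    by_cases hB : x ∈ B
    · exact .inl (.inr hB)
    · exact .inr ⟨hx, hB⟩)
  have hAS1' : A ⊆ S1 := by
    intro x hx
    by_cases hBC : x ∈ B ∪ C
    · rcases hBC with h | h
      · exact hBS1 h
      · exact hCS1 h
    · exact hAS1 ⟨hx, hBC⟩
  have hDW2 : D ⊆ W2 := by
    intro x hx
    rw [hW2]
    by_cases hBC : x ∈ B ∪ C
    · rcases hBC with h | h
      · exact .inl (.inr h)
      · by_cases hB : x ∈ B
        · exact .inl (.inr hB)
        · exact .inr ⟨h, hB⟩
    · exact .inl (.inl ⟨.inr hx, hBC⟩)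
  have hS1S : S1 ⊆ S := by
    rw [hS1def, hSdef]
    apply aux_AnSet_mono
    rw [hW1, hW2]
    intro x hx
    simp only [Set.mem_union, Set.mem_diff, Set.mem_union] at hx ⊢
    tauto
  have hS1closed : ∀ u x, Relation.ReflTransGen E u x → x ∈ S1 → u ∈ S1 := by
    intro u x h hx
    rw [hS1def] at hx ⊢
    exact aux_rtg_mem_AnSet h hx
  have hSanc : ∀ x a, a ∈ D → Relation.ReflTransGen E x a → x ∈ S := by
    intro x a ha h
    rw [hSdef, aux_mem_AnSet_iff]
    rcases Relation.reflTransGen_iff_eq_or_transGen.1 h with rfl | htg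
    · exact .inl (hDW2 ha)
    · exact .inr ⟨a, hDW2 ha, htg⟩
  have hSD : ∀ x, x ∈ S → x ∉ S1 → ∃ a ∈ D, Relation.ReflTransGen E x a := by
    intro x hxS hx1
    rw [hSdef, aux_mem_AnSet_iff] at hxS
    rcases hxS with hx | ⟨a, ha, htg⟩
    · rw [hW2] at hx
      rcases hx with (⟨hAD, hBC⟩ | hB) | hC
      · rcases hAD with hA | hD
        · exact absurd (hAS1' hA) hx1
        · exact ⟨x, hD, .refl⟩
      · exact absurd (hBS1 hB) hx1
      · exact absurd (hCS1 hC.1) hx1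
    · rw [hW2] at ha
      rcases ha with (⟨hAD, hBC⟩ | hB) | hC
      · rcases hAD with hA | hD
        · exact absurd (hS1closed x a htg.to_reflTransGen (hAS1' hA)) hx1
        · exact ⟨a, hD, htg.to_reflTransGen⟩
      · exact absurd (hS1closed x a htg.to_reflTransGen (hBS1 hB)) hx1
      · exact absurd (hS1closed x a htg.to_reflTransGen (hCS1 hC.1)) hx1
  have keyL : ∀ (n : ℕ) (l : List V) (v w : V), l.length ≤ n → v ∈ A \ (B ∪ C) → w ∈ B →
      IsUPath (mg E B S) l v w → (∀ c ∈ C \ B, c ∉ l) → False := by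
    intro n
    induction n with
    | zero =>
      intro l v w hlen _ _ hp _
      obtain ⟨-, -, hlen2, -, -⟩ := hp
      omega
    | succ n ih =>
      intro l v w hlen hv hw hp havoid
      obtain ⟨hchain, hnd, hlen2, hhead, hlast⟩ := hp
      -- the common final construction
      have main : ∀ (u p : V) (l₀ t : List V), l = l₀ ++ p :: t → l₀ ≠ [] →
          u ∉ S1 → u ∈ S → mg E B S u p → (∀ y ∈ p :: t, y ∈ S1) → False := by
        intro u p l₀ t heq hl₀ hu1 huS hup hpt1
        obtain ⟨d, rl, hdD, hdS1, hrlchain, hrlnd, hrl1, hrlh, hrll⟩ :=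
          aux_escape hE hBS1 hS1closed hSanc hu1 (hSD u huS hu1)
        have hptchain : (p :: t).Chain' (mg E B S) := hchain.suffix ⟨l₀, heq.symm⟩
        have hrlne : rl ≠ [] := by rintro rfl; simp at hrlh
        have hσchain : (rl ++ p :: t).Chain' (mg E B S) := by
          refine List.isChain_append.2 ⟨hrlchain, hptchain, ?_⟩
          intro x hx y hy
          rw [Option.mem_def, hrll, Option.some.injEq] at hx
          simp only [List.head?_cons, Option.mem_def, Option.some.injEq] at hy
          subst hx; subst hy; exact hup
        have hptnd : (p :: t).Nodup := List.Nodup.sublist (List.IsSuffix.sublist ⟨l₀, heq.symm⟩) hnd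
        have hσnd : (rl ++ p :: t).Nodup := by
          refine List.Nodup.append hrlnd hptnd ?_
          intro x hxrl hxpt
          exact hrl1 x hxrl (hpt1 x hxpt)
        have hlastpt : (p :: t).getLast? = some w := by
          rw [heq, List.getLast?_append_cons] at hlast
          exact hlast
        have hσpath : IsUPath (mg E B S) (rl ++ p :: t) d w := by
          refine ⟨hσchain, hσnd, ?_, ?_, ?_⟩
          · rw [List.length_append]
            have h1' : 1 ≤ rl.length := List.length_pos_iff.2 hrlne
            simp only [List.length_cons]
            omega
          · rw [List.head?_append_of_ne_nil _ hrlne]; exact hrlh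
          · rw [List.getLast?_append_cons]; exact hlastpt
        have hdD' : d ∈ D \ (B ∪ (A ∪ C)) := by
          refine ⟨hdD, ?_⟩
          rintro (h | h | h)
          · exact hdS1 (hBS1 h)
          · exact hdS1 (hAS1' h)
          · exact hdS1 (hCS1 h)
        obtain ⟨c', hc'AC, hc'σ⟩ := h2 d hdD' w hw _ hσpath
        have hσavoid : ∀ x ∈ C \ B, x ∉ rl ++ p :: t := by
          intro x hx hmem
          rcases List.mem_append.1 hmem with h | h
          · exact hrl1 x h (hCS1 hx.1)
          · exact havoid x hx (by rw [heq]; exact List.mem_append_right _ h)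
        have hc'A : c' ∈ A \ (B ∪ C) := by
          obtain ⟨hAC, hB⟩ := hc'AC
          rcases hAC with hA | hC
          · refine ⟨hA, ?_⟩
            rintro (h | h)
            · exact hB h
            · exact hσavoid c' ⟨h, hB⟩ hc'σ
          · exact absurd hc'σ (hσavoid c' ⟨hC, hB⟩)
        have hc'pt : c' ∈ p :: t := by
          rcases List.mem_append.1 hc'σ with h | h
          · exact (hrl1 c' h (hAS1 hc'A)).elim
          · exact h
        obtain ⟨t₁, t₂, hteq⟩ := List.append_of_mem hc'pt
        have hssuffix : (c' :: t₂) <:+ l := ⟨l₀ ++ t₁, by rw [heq, hteq]; simp⟩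
        have hschain : (c' :: t₂).Chain' (mg E B S) := hchain.suffix hssuffix
        have hsnd : (c' :: t₂).Nodup := List.Nodup.sublist hssuffix.sublist hnd
        have hslast : (c' :: t₂).getLast? = some w := by
          rw [hteq, List.getLast?_append_cons] at hlastpt
          exact hlastpt
        have ht₂ne : t₂ ≠ [] := by
          rintro rfl
          simp only [List.getLast?_singleton, Option.some.injEq] at hslast
          cases hslast
          exact hc'A.2 (.inl hw)
        have hslen : 2 ≤ (c' :: t₂).length := by
          cases t₂ with
          | nil => exact absurd rfl ht₂ne
          | cons _ _ => simp only [List.length_cons]; omega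
        have hslen' : (c' :: t₂).length ≤ n := by
          have e1 := congrArg List.length heq
          have e2 := congrArg List.length hteq
          have e3 : 1 ≤ l₀.length := List.length_pos_iff.2 hl₀
          simp only [List.length_append, List.length_cons] at e1 e2 hlen ⊢
          omega
        exact ih (c' :: t₂) c' w hslen' hc'A hw ⟨hschain, hsnd, hslen, rfl, hslast⟩
          (fun x hx hmem => havoid x hx (hssuffix.sublist.subset hmem))
      by_cases hall : ∀ x ∈ l, x ∈ S1
      · by_cases hch1 : l.Chain' (mg E B S1)
        · obtain ⟨c, hc, hcl⟩ := h1 v hv w hw l ⟨hch1, hnd, hlen2, hhead, hlast⟩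
          exact havoid c hc hcl
        · obtain ⟨l₁, q, p, t, heq, hqp1⟩ := aux_not_chain'_split hch1
          have hq1 : q ∈ S1 := hall q (by rw [heq]; simp)
          have hp1 : p ∈ S1 := hall p (by rw [heq]; simp)
          have hqp : mg E B S q p := by
            have hsuf := hchain.suffix (⟨l₁, heq.symm⟩ : (q :: p :: t) <:+ l)
            exact (List.isChain_cons_cons.1 hsuf).1
          rw [mg_iff] at hqp
          obtain ⟨hne, hcase⟩ := hqp
          rcases hcase with hd | hd | ⟨c, hc1, hc2⟩
          · exact hqp1 (by rw [mg_iff]; exact ⟨hne, .inl ⟨hd.1, hq1, hp1⟩⟩)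
          · exact hqp1 (by rw [mg_iff]; exact ⟨hne, .inr (.inl ⟨hd.1, hp1, hq1⟩)⟩)
          · by_cases hcS1 : c ∈ S1
            · exact hqp1 (by
                rw [mg_iff]
                exact ⟨hne, .inr (.inr ⟨c, ⟨hc1.1, hq1, hcS1⟩, hc2.1, hp1, hcS1⟩)⟩)
            · have hcS : c ∈ S := hc1.2.2
              have hcp : mg E B S c p := by
                rw [mg_iff]
                exact ⟨(hE p c hc2.1.1).symm, .inr (.inl hc2)⟩
              refine main c p (l₁ ++ [q]) t (by rw [heq]; simp) (by simp) hcS1 hcS hcp ?_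
              intro y hy
              refine hall y ?_
              rw [heq]
              simp only [List.mem_append, List.mem_cons] at hy ⊢
              tauto
      · push_neg at hall
        obtain ⟨l₁, q, t, heq, hq1, ht1⟩ := aux_last_pred_split (P := fun x => x ∉ S1) hall
        have ht1' : ∀ x ∈ t, x ∈ S1 := fun x hx => not_not.1 (ht1 x hx)
        have htne : t ≠ [] := by
          rintro rfl
          rw [heq, List.getLast?_append_cons] at hlast
          simp only [List.getLast?_singleton, Option.some.injEq] at hlast
          cases hlast
          exact hq1 (hBS1 hw)
        cases t with
        | nil => exact absurd rfl htne
        | cons p t' =>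
          have hqp : mg E B S q p := by
            have hsuf := hchain.suffix (⟨l₁, heq.symm⟩ : (q :: p :: t') <:+ l)
            exact (List.isChain_cons_cons.1 hsuf).1
          have hqS : q ∈ S := (mg_mem hqp).1
          refine main q p (l₁ ++ [q]) t' (by rw [heq]; simp) (by simp) hq1 hqS hqp ?_
          intro y hy
          exact ht1' y hy
  intro v hv w hw l hp
  by_contra hcon
  push_neg at hcon
  by_cases hvA : v ∈ A
  · exact keyL l.length l v w le_rfl ⟨hvA, hv.2⟩ hw hp hcon
  · have hvD : v ∈ D \ (B ∪ (A ∪ C)) := by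
      obtain ⟨hAD, hBC⟩ := hv
      refine ⟨hAD.resolve_left hvA, ?_⟩
      rintro (h | h | h)
      · exact hBC (.inl h)
      · exact hvA h
      · exact hBC (.inr h)
    obtain ⟨c, hcAC, hcl⟩ := h2 v hvD w hw l hp
    obtain ⟨hchain, hnd, hlen2, hhead, hlast⟩ := hp
    have hcA : c ∈ A \ (B ∪ C) := by
      obtain ⟨hAC, hB⟩ := hcAC
      rcases hAC with hA | hC
      · refine ⟨hA, ?_⟩
        rintro (h | h)
        · exact hB h
        · exact hcon c ⟨h, hB⟩ hcl
      · exact absurd hcl (hcon c ⟨hC, hB⟩)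
    obtain ⟨t₁, t₂, heq⟩ := List.append_of_mem hcl
    have hsuf : (c :: t₂) <:+ l := ⟨t₁, heq.symm⟩
    have hlast' : (c :: t₂).getLast? = some w := by
      rw [heq, List.getLast?_append_cons] at hlast
      exact hlast
    have ht₂ : t₂ ≠ [] := by
      rintro rfl
      simp only [List.getLast?_singleton, Option.some.injEq] at hlast'
      cases hlast'
      exact hcA.2 (.inl hw)
    refine keyL l.length (c :: t₂) c w ?_ hcA hw
      ⟨hchain.suffix hsuf, List.Nodup.sublist hsuf.sublist hnd, ?_, rfl, hlast'⟩
      (fun x hx hm => hcon x hx (hsuf.sublist.subset hm))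
    · have := congrArg List.length heq
      simp only [List.length_append, List.length_cons] at this ⊢
      omega
    · cases t₂ with
      | nil => exact absurd rfl ht₂
      | cons _ _ => simp only [List.length_cons]; omega
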